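/- arXiv:2406.16617 — 5 statements merged into one kernel-verified Lean document; each statement's English description precedes it below -/
import Mathlib

section
/- Let k > 0 and let α : [0,1] → ℝ be continuous with ∫_0^1 α(y) dy = 0. Suppose ψ : [0,1] → ℝ is twice continuously differentiable with ψ(y) > 0 for all y ∈ [0,1], ψ''(y) + (k α(y) + λ)ψ(y) = 0 for all y ∈ (0,1), and ψ'(0) = ψ'(1) = 0. Then λ = −∫_0^1 (ψ'(y)/ψ(y))² dy. In particular λ ≤ 0, and if α is not identically zero then λ < 0. -/
open Set MeasureTheory

/-- Variational identity for the eigenvalue of the Sturm–Liouville problem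
`ψ'' + (kα(y) + λ)ψ = 0` on `(0,1)` with Neumann boundary conditions and positive
eigenfunction `ψ`: `λ = −∫_0^1 (ψ'/ψ)² dy`, hence `λ ≤ 0`, with strict inequality
when `α` is not identically zero on `[0,1]`. -/
theorem stmt_2 (k lam : ℝ) (hk : 0 < k) (α ψ ψ' ψ'' : ℝ → ℝ)
    (hαcont : ContinuousOn α (Icc 0 1))
    (hαmean : (∫ y in (0:ℝ)..1, α y) = 0)
    (hψ' : ∀ y ∈ Icc (0:ℝ) 1, HasDerivWithinAt ψ (ψ' y) (Icc 0 1) y)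
    (hψ'' : ∀ y ∈ Icc (0:ℝ) 1, HasDerivWithinAt ψ' (ψ'' y) (Icc 0 1) y)
    (hψ''cont : ContinuousOn ψ'' (Icc 0 1))
    (hψpos : ∀ y ∈ Icc (0:ℝ) 1, 0 < ψ y)
    (hode : ∀ y ∈ Ioo (0:ℝ) 1, ψ'' y + (k * α y + lam) * ψ y = 0)
    (hbc0 : ψ' 0 = 0) (hbc1 : ψ' 1 = 0) :
    lam = -∫ y in (0:ℝ)..1, (ψ' y / ψ y)^2 ∧
    lam ≤ 0 ∧
    ((∃ y ∈ Icc (0:ℝ) 1, α y ≠ 0) → lam < 0) := by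
  have h01 : (0:ℝ) ≤ 1 := zero_le_one
  have hIcc : uIcc (0:ℝ) 1 = Icc 0 1 := uIcc_of_le h01
  have hψcont : ContinuousOn ψ (Icc 0 1) := fun y hy => (hψ' y hy).continuousWithinAt
  have hψ'cont : ContinuousOn ψ' (Icc 0 1) := fun y hy => (hψ'' y hy).continuousWithinAt
  have hψne : ∀ y ∈ Icc (0:ℝ) 1, ψ y ≠ 0 := fun y hy => (hψpos y hy).ne'
  set g : ℝ → ℝ := fun y => ψ' y / ψ y with hgdef
  set G : ℝ → ℝ := fun y => ψ'' y / ψ y - (ψ' y / ψ y)^2 with hGdef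
  have hgcont : ContinuousOn g (Icc 0 1) := hψ'cont.div hψcont hψne
  have hg2cont : ContinuousOn (fun y => g y ^ 2) (Icc 0 1) := hgcont.pow 2
  have hGcont : ContinuousOn G (Icc 0 1) :=
    (hψ''cont.div hψcont hψne).sub hg2cont
  have hgderiv : ∀ y ∈ Icc (0:ℝ) 1, HasDerivWithinAt g (G y) (Icc 0 1) y := by
    intro y hy
    have h : HasDerivWithinAt (fun x => ψ' x / ψ x) _ (Icc 0 1) y :=
      (hψ'' y hy).div (hψ' y hy) (hψne y hy)
    convert h using 1
    simp only [hGdef]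
    field_simp [hψne y hy]
  have hGint : IntervalIntegrable G volume 0 1 := by
    apply ContinuousOn.intervalIntegrable; rwa [hIcc]
  have hg2int : IntervalIntegrable (fun y => g y ^ 2) volume 0 1 := by
    apply ContinuousOn.intervalIntegrable; rwa [hIcc]
  have hαint : IntervalIntegrable α volume 0 1 := by
    apply ContinuousOn.intervalIntegrable; rwa [hIcc]
  -- FTC
  have hftc : (∫ y in (0:ℝ)..1, G y) = g 1 - g 0 := by
    apply intervalIntegral.integral_eq_sub_of_hasDeriv_right_of_le h01 hgcont _ hGint
    intro x hx
    exact ((hgderiv x (Ioo_subset_Icc_self hx)).hasDerivAt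
      (Icc_mem_nhds hx.1 hx.2)).hasDerivWithinAt
  have hftc0 : (∫ y in (0:ℝ)..1, G y) = 0 := by
    rw [hftc]; simp [hgdef, hbc0, hbc1]
  -- G agrees with -(k α + lam) - g² on Ioo, hence a.e. on Ioc
  have hcongr : (∫ y in (0:ℝ)..1, G y)
      = ∫ y in (0:ℝ)..1, (-(k * α y + lam) - g y ^ 2) := by
    apply intervalIntegral.integral_congr_ae
    have h1 : ∀ᵐ (y:ℝ), y ≠ 1 := by
      rw [ae_iff]
      have : {y : ℝ | ¬ y ≠ 1} = {1} := by ext y; simp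
      rw [this]
      exact measure_singleton 1
    filter_upwards [h1] with y hy hmem
    rw [uIoc_of_le h01] at hmem
    have hyIoo : y ∈ Ioo (0:ℝ) 1 := ⟨hmem.1, lt_of_le_of_ne hmem.2 hy⟩
    have hYIcc : y ∈ Icc (0:ℝ) 1 := Ioo_subset_Icc_self hyIoo
    have hode' := hode y hyIoo
    have : ψ'' y = -(k * α y + lam) * ψ y := by linarith
    simp only [hGdef, this]
    rw [mul_div_assoc, div_self (hψne y hYIcc)]
    ring
  have hsplit : (∫ y in (0:ℝ)..1, (-(k * α y + lam) - g y ^ 2))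
      = -lam - ∫ y in (0:ℝ)..1, g y ^ 2 := by
    rw [intervalIntegral.integral_sub _ hg2int]
    · congr 1
      rw [intervalIntegral.integral_neg]
      rw [intervalIntegral.integral_add _ intervalIntegrable_const]
      · rw [intervalIntegral.integral_const_mul, hαmean, intervalIntegral.integral_const]
        simp
      · exact hαint.const_mul k
    · exact ((hαint.const_mul k).add intervalIntegrable_const).neg
  have hkey : lam = -∫ y in (0:ℝ)..1, g y ^ 2 := by
    have := hftc0.symm.trans (hcongr.trans hsplit)
    linarith
  have hInonneg : 0 ≤ ∫ y in (0:ℝ)..1, g y ^ 2 :=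
    intervalIntegral.integral_nonneg h01 (fun y _ => sq_nonneg _)
  refine ⟨hkey, by linarith, ?_⟩
  rintro ⟨y₀, hy₀, hαy₀⟩
  by_contra hcon
  push_neg at hcon
  have hlam0 : lam = 0 := le_antisymm (by linarith) hcon
  have hI0 : (∫ y in (0:ℝ)..1, g y ^ 2) = 0 := by linarith [hkey, hlam0]
  -- g² = 0 a.e. on Ioc, hence g = 0 on Ioc by continuity
  have hae : (fun y => g y ^ 2) =ᵐ[volume.restrict (Ioc (0:ℝ) 1)] 0 := by
    rw [← intervalIntegral.integral_eq_zero_iff_of_le_of_nonneg_ae h01 _ hg2int]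
    · exact hI0
    · exact Filter.Eventually.of_forall (fun y => sq_nonneg _)
  have hg0 : ∀ y ∈ Ioc (0:ℝ) 1, g y = 0 := by
    have := Measure.eqOn_Ioc_of_ae_eq (volume) hae (hg2cont.mono Ioc_subset_Icc_self)
      continuousOn_const
    intro y hy
    have := this hy
    simpa using pow_eq_zero_iff (n := 2) (by norm_num) |>.mp this
  -- hence ψ' = 0 on Ioo, so ψ'' = 0 on Ioo, so α = 0 on Ioo
  have hψ'0 : ∀ y ∈ Ioo (0:ℝ) 1, ψ' y = 0 := by
    intro y hy
    have := hg0 y (Ioo_subset_Ioc_self hy)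
    have hne := hψne y (Ioo_subset_Icc_self hy)
    simp only [hgdef, div_eq_zero_iff] at this
    tauto
  have hψ''0 : ∀ y ∈ Ioo (0:ℝ) 1, ψ'' y = 0 := by
    intro y hy
    have hd : HasDerivAt ψ' (ψ'' y) y :=
      (hψ'' y (Ioo_subset_Icc_self hy)).hasDerivAt (Icc_mem_nhds hy.1 hy.2)
    have heq : ψ' =ᶠ[nhds y] (fun _ => (0:ℝ)) := by
      filter_upwards [isOpen_Ioo.mem_nhds hy] with z hz
      exact hψ'0 z hz
    have hd0 : HasDerivAt (fun _ : ℝ => (0:ℝ)) (ψ'' y) y := hd.congr_of_eventuallyEq heq.symm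
    exact (hd0.unique (hasDerivAt_const y 0))
  have hα0 : ∀ y ∈ Ioo (0:ℝ) 1, α y = 0 := by
    intro y hy
    have h1 := hode y hy
    have h2 := hψ''0 y hy
    have h3 := hψpos y (Ioo_subset_Icc_self hy)
    have : (k * α y + lam) * ψ y = 0 := by linarith
    have h4 : k * α y + lam = 0 := by
      rcases mul_eq_zero.mp this with h | h
      · exact h
      · exact absurd h h3.ne'
    have : k * α y = 0 := by linarith [hlam0]
    exact (mul_eq_zero.mp this).resolve_left hk.ne' 
  -- extend to Icc by continuity
  have hαIcc : ∀ y ∈ Icc (0:ℝ) 1, α y = 0 := by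
    have haeα : α =ᵐ[volume.restrict (Icc (0:ℝ) 1)] 0 := by
      rw [Filter.EventuallyEq, ae_restrict_iff' measurableSet_Icc]
      have hne : ∀ᵐ (y:ℝ), y ≠ 0 ∧ y ≠ 1 := by
        have h0 : ∀ᵐ (y:ℝ), y ≠ 0 := by
          rw [ae_iff]
          have : {y : ℝ | ¬ y ≠ 0} = {0} := by ext y; simp
          rw [this]; exact measure_singleton 0
        have h1 : ∀ᵐ (y:ℝ), y ≠ 1 := by
          rw [ae_iff]
          have : {y : ℝ | ¬ y ≠ 1} = {1} := by ext y; simp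
          rw [this]; exact measure_singleton 1
        exact h0.and h1
      filter_upwards [hne] with y hy hmem
      simpa using hα0 y ⟨lt_of_le_of_ne hmem.1 (Ne.symm hy.1), lt_of_le_of_ne hmem.2 hy.2⟩
    exact Measure.eqOn_Icc_of_ae_eq volume (by norm_num) haeα hαcont continuousOn_const
  exact hαy₀ (hαIcc y₀ hy₀)
end

section
/- Let k > 0 and let α : [0,1] → ℝ be continuous, not identically zero, with ∫_0^1 α(y) dy = 0. Suppose ψ : [0,1] → ℝ is twice continuously differentiable with ψ(y) > 0 for all y ∈ [0,1], ψ''(y) + (k α(y) + λ)ψ(y) = 0 for all y ∈ (0,1), and ψ'(0) = ψ'(1) = 0. Then the leading-order speed correction v₁ = −λ/k satisfies 0 < v₁ < sup_{y∈[0,1]} α(y); in particular weak advection always enhances the front propagation speed but by no more than the maximal flow velocity. -/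
open Set MeasureTheory

/-- For the principal (positive-eigenfunction) solution of the Sturm–Liouville problem
`ψ'' + (kα(y) + λ)ψ = 0` with Neumann boundary conditions, where `α` is a nontrivial
continuous zero-mean shear profile, the leading-order speed correction `v₁ = −λ/k`
satisfies `0 < v₁ < sup_{y∈[0,1]} α(y)`. -/
theorem stmt_3 (k lam : ℝ) (hk : 0 < k) (α ψ ψ' ψ'' : ℝ → ℝ)
    (hαcont : ContinuousOn α (Icc 0 1))
    (hαnontriv : ∃ y ∈ Icc (0:ℝ) 1, α y ≠ 0)
    (hαmean : (∫ y in (0:ℝ)..1, α y) = 0)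
    (hψ' : ∀ y ∈ Icc (0:ℝ) 1, HasDerivWithinAt ψ (ψ' y) (Icc 0 1) y)
    (hψ'' : ∀ y ∈ Icc (0:ℝ) 1, HasDerivWithinAt ψ' (ψ'' y) (Icc 0 1) y)
    (hψ''cont : ContinuousOn ψ'' (Icc 0 1))
    (hψpos : ∀ y ∈ Icc (0:ℝ) 1, 0 < ψ y)
    (hode : ∀ y ∈ Ioo (0:ℝ) 1, ψ'' y + (k * α y + lam) * ψ y = 0)
    (hbc0 : ψ' 0 = 0) (hbc1 : ψ' 1 = 0) :
    0 < -lam / k ∧ -lam / k < sSup (α '' Icc 0 1) := by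
  have h01 : (0:ℝ) < 1 := one_pos
  have hIcc : Ioo (0:ℝ) 1 ⊆ Icc 0 1 := Ioo_subset_Icc_self
  have hψcont : ContinuousOn ψ (Icc 0 1) := fun y hy => (hψ' y hy).continuousWithinAt
  have hψ'cont : ContinuousOn ψ' (Icc 0 1) := fun y hy => (hψ'' y hy).continuousWithinAt
  have hψne : ∀ y ∈ Icc (0:ℝ) 1, ψ y ≠ 0 := fun y hy => (hψpos y hy).ne'
  have huIcc : uIcc (0:ℝ) 1 = Icc 0 1 := uIcc_of_le h01.le
  -- a continuous function on [0,1] which is constant on (0,1) is constant on [0,1]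
  have extend : ∀ (f : ℝ → ℝ) (c : ℝ), ContinuousOn f (Icc 0 1) →
      (∀ y ∈ Ioo (0:ℝ) 1, f y = c) → ∀ y ∈ Icc (0:ℝ) 1, f y = c := by
    intro f c hf hfc y hy
    have hyc : y ∈ closure (Ioo (0:ℝ) 1) := by
      rw [closure_Ioo (by norm_num : (0:ℝ) ≠ 1)]; exact hy
    have hne : (nhdsWithin y (Ioo (0:ℝ) 1)).NeBot := mem_closure_iff_nhdsWithin_neBot.mp hyc
    have h1 : Filter.Tendsto f (nhdsWithin y (Ioo (0:ℝ) 1)) (nhds (f y)) :=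
      (hf y hy).mono hIcc
    have h2 : Filter.Tendsto f (nhdsWithin y (Ioo (0:ℝ) 1)) (nhds c) := by
      refine Filter.Tendsto.congr' ?_ tendsto_const_nhds
      filter_upwards [self_mem_nhdsWithin] with z hz
      exact (hfc z hz).symm
    exact tendsto_nhds_unique h1 h2
  -- Key lemma: ψ' cannot vanish identically on (0,1)
  have key : (∀ y ∈ Ioo (0:ℝ) 1, ψ' y = 0) → False := by
    intro h0
    have hψ'0 : ∀ y ∈ Icc (0:ℝ) 1, ψ' y = 0 := extend ψ' 0 hψ'cont h0
    have hψ''0 : ∀ y ∈ Ioo (0:ℝ) 1, ψ'' y = 0 := by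
      intro y hy
      have h1 : HasDerivWithinAt (fun _ => (0:ℝ)) (ψ'' y) (Icc 0 1) y :=
        (hψ'' y (hIcc hy)).congr (fun z hz => (hψ'0 z hz).symm) (hψ'0 y (hIcc hy)).symm
      have h2 : HasDerivWithinAt (fun _ => (0:ℝ)) 0 (Icc (0:ℝ) 1) y :=
        hasDerivWithinAt_const _ _ _
      have hu : UniqueDiffWithinAt ℝ (Icc (0:ℝ) 1) y := (uniqueDiffOn_Icc h01) y (hIcc hy)
      exact (h1.derivWithin hu).symm.trans (h2.derivWithin hu)
    have hα_eq : ∀ y ∈ Ioo (0:ℝ) 1, α y = -lam / k := by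
      intro y hy
      have h1 := hode y hy
      have h2 := hψ''0 y hy
      have h3 := hψne y (hIcc hy)
      have h4 : (k * α y + lam) * ψ y = 0 := by linarith
      have h5 : k * α y + lam = 0 := by
        rcases mul_eq_zero.mp h4 with h | h
        · exact h
        · exact absurd h h3
      field_simp
      linarith
    have hα_eqI : ∀ y ∈ Icc (0:ℝ) 1, α y = -lam / k := extend α _ hαcont hα_eq
    have hint : (∫ y in (0:ℝ)..1, α y) = -lam / k := by
      rw [intervalIntegral.integral_congr (g := fun _ => -lam / k)
        (fun z hz => hα_eqI z (huIcc ▸ hz))]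
      simp
    have hz : -lam / k = 0 := by rw [← hint]; exact hαmean
    have hlam0 : lam = 0 := by
      rcases div_eq_zero_iff.mp hz with h | h
      · linarith
      · exact absurd h hk.ne'
    obtain ⟨y0, hy0, hy0ne⟩ := hαnontriv
    exact hy0ne (by simpa [hlam0] using hα_eqI y0 hy0)
  -- Riccati substitution w = ψ'/ψ
  set w : ℝ → ℝ := fun y => ψ' y / ψ y with hwdef
  have hwcont : ContinuousOn w (Icc 0 1) := hψ'cont.div hψcont hψne
  have hwderiv : ∀ y ∈ Ioo (0:ℝ) 1, HasDerivAt w (-(k * α y + lam) - (w y) ^ 2) y := by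
    intro y hy
    have hmem : Icc (0:ℝ) 1 ∈ nhds y := Icc_mem_nhds hy.1 hy.2
    have h1 : HasDerivAt ψ (ψ' y) y := (hψ' y (hIcc hy)).hasDerivAt hmem
    have h2 : HasDerivAt ψ' (ψ'' y) y := (hψ'' y (hIcc hy)).hasDerivAt hmem
    have hne := hψne y (hIcc hy)
    have h3 : HasDerivAt w _ y := h2.div h1 hne
    convert h3 using 1
    have hψ''eq : ψ'' y = -(k * α y + lam) * ψ y := by linarith [hode y hy]
    rw [hψ''eq]
    simp only [hwdef]
    field_simp
  have hαint : IntervalIntegrable α volume 0 1 :=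
    (huIcc ▸ hαcont : ContinuousOn α (uIcc 0 1)).intervalIntegrable
  have hw2cont : ContinuousOn (fun y => (w y) ^ 2) (Icc 0 1) := hwcont.pow 2
  have hw2int : IntervalIntegrable (fun y => (w y) ^ 2) volume 0 1 := by
    apply ContinuousOn.intervalIntegrable
    rw [huIcc]; exact hw2cont
  have hfint : IntervalIntegrable (fun y => -(k * α y + lam)) volume 0 1 := by
    have : (fun y => -(k * α y + lam)) = fun y => (-k) * α y + (-lam) := by funext y; ring
    rw [this]
    exact (hαint.const_mul _).add intervalIntegrable_const
  have hgint : IntervalIntegrable (fun y => -(k * α y + lam) - (w y) ^ 2) volume 0 1 :=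
    hfint.sub hw2int
  have hFTC : (∫ y in (0:ℝ)..1, (-(k * α y + lam) - (w y) ^ 2)) = w 1 - w 0 := by
    apply intervalIntegral.integral_eq_sub_of_hasDeriv_right_of_le h01.le hwcont ?_ hgint
    intro y hy
    exact (hwderiv y hy).hasDerivWithinAt
  have hw10 : w 1 - w 0 = 0 := by
    simp [hwdef, hbc0, hbc1]
  have hsplit : (∫ y in (0:ℝ)..1, (-(k * α y + lam) - (w y) ^ 2))
      = (∫ y in (0:ℝ)..1, -(k * α y + lam)) - ∫ y in (0:ℝ)..1, (w y) ^ 2 :=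
    intervalIntegral.integral_sub hfint hw2int
  have hfirst : (∫ y in (0:ℝ)..1, -(k * α y + lam)) = -lam := by
    have heq : (fun y => -(k * α y + lam)) = fun y => (-k) * α y + (-lam) := by funext y; ring
    rw [heq, intervalIntegral.integral_add (hαint.const_mul _) intervalIntegrable_const,
      intervalIntegral.integral_const_mul, hαmean]
    simp
  have hlamval : lam = -(∫ y in (0:ℝ)..1, (w y) ^ 2) := by
    rw [hw10] at hFTC
    rw [hsplit, hfirst] at hFTC
    linarith
  have hInn : 0 ≤ ∫ y in (0:ℝ)..1, (w y) ^ 2 :=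
    intervalIntegral.integral_nonneg h01.le (fun y _ => sq_nonneg _)
  have hlamneg : lam < 0 := by
    rcases lt_or_eq_of_le hInn with h | h
    · linarith
    · exfalso
      have hzero : (∫ y in (0:ℝ)..1, (w y) ^ 2) = 0 := h.symm
      have hae : (fun y => (w y) ^ 2) =ᵐ[volume.restrict (Ioc (0:ℝ) 1)] 0 :=
        (intervalIntegral.integral_eq_zero_iff_of_le_of_nonneg_ae h01.le
          (Filter.Eventually.of_forall fun y => sq_nonneg _) hw2int).mp hzero
      have heq : EqOn (fun y => (w y) ^ 2) 0 (Ioc (0:ℝ) 1) :=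
        Measure.eqOn_Ioc_of_ae_eq volume hae (hw2cont.mono Ioc_subset_Icc_self)
          continuousOn_const
      apply key
      intro y hy
      have h1 : (w y) ^ 2 = 0 := heq (Ioo_subset_Ioc_self hy)
      have h2 : w y = 0 := by
        have := sq_eq_zero_iff.mp h1
        exact this
      rcases div_eq_zero_iff.mp h2 with h | h
      · exact h
      · exact absurd h (hψne y (hIcc hy))
  have hbdd : BddAbove (α '' Icc 0 1) :=
    (isCompact_Icc.image_of_continuousOn hαcont).bddAbove
  have hle : ∀ y ∈ Icc (0:ℝ) 1, α y ≤ sSup (α '' Icc 0 1) :=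
    fun y hy => le_csSup hbdd ⟨y, hy, rfl⟩
  have hMlt : -lam / k < sSup (α '' Icc 0 1) := by
    by_contra hcon
    push_neg at hcon
    have hkM : ∀ y ∈ Icc (0:ℝ) 1, k * α y + lam ≤ 0 := by
      intro y hy
      have h1 := hle y hy
      have h2 : sSup (α '' Icc 0 1) * k ≤ -lam := by
        have := (le_div_iff₀ hk).mp hcon
        linarith
      nlinarith
    have hψ''nonneg : ∀ y ∈ Ioo (0:ℝ) 1, 0 ≤ ψ'' y := by
      intro y hy
      have h1 := hode y hy
      have h2 := hψpos y (hIcc hy)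
      nlinarith [hkM y (hIcc hy)]
    have hmono : MonotoneOn ψ' (Icc 0 1) := by
      apply monotoneOn_of_deriv_nonneg (convex_Icc 0 1) hψ'cont
      · intro y hy
        rw [interior_Icc] at hy
        exact ((hψ'' y (hIcc hy)).hasDerivAt
          (Icc_mem_nhds hy.1 hy.2)).differentiableAt.differentiableWithinAt
      · intro y hy
        rw [interior_Icc] at hy
        rw [((hψ'' y (hIcc hy)).hasDerivAt (Icc_mem_nhds hy.1 hy.2)).deriv]
        exact hψ''nonneg y hy
    apply key
    intro y hy
    have h1 : ψ' y ≤ ψ' 1 := hmono (hIcc hy) (right_mem_Icc.mpr h01.le) hy.2.le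
    have h2 : ψ' 0 ≤ ψ' y := hmono (left_mem_Icc.mpr h01.le) (hIcc hy) hy.1.le
    rw [hbc1] at h1
    rw [hbc0] at h2
    linarith
  exact ⟨div_pos (by linarith) hk, hMlt⟩
end

section
/- Let v > 0, u_c ∈ (0,1), and let f : ℝ → ℝ be continuously differentiable. Suppose U : ℝ → ℝ is continuously differentiable on ℝ and twice continuously differentiable on ℝ∖{0}, satisfies U''(ξ) + v·U'(ξ) + f(U(ξ)) = 0 for all ξ < 0, U(ξ) = u_c·e^{−vξ} for all ξ ≥ 0, and U'' has finite one-sided limits at 0. Let μ > 0 and β ∈ ℝ, and set a(ξ) = −(β/μ)·U'(ξ). Then: (i) a''(ξ) + v·a'(ξ) − (μ − 1_{ξ<0}·f'(U(ξ)))·a(ξ) = β·U'(ξ) for all ξ ∈ ℝ∖{0}; (ii) a is continuous at 0 with a(0) = (β/μ)·v·u_c; (iii) the one-sided limits of a' at 0 satisfy a'(0⁺) − a'(0⁻) = −f(u_c)·(v·u_c)^{−1}·a(0); (iv) if U'(ξ) → 0 as ξ → −∞, then a(ξ) → 0 as |ξ| → ∞. -/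
open Set Filter

/-- Verification that `a = −(β/μ)U'` solves the transverse-mode correction problem for
the cut-off KPP travelling wave `U` (speed `v`, cut-off `u_c`):
(i) `a'' + va' − (μ − 1_{ξ<0} f'(U))a = βU'` away from `0`;
(ii) `a` is continuous at `0` with `a(0) = (β/μ)vu_c`;
(iii) the one-sided limits of `a'` at `0` jump by `−f(u_c)(vu_c)⁻¹ a(0)`;
(iv) if `U' → 0` at `−∞` then `a → 0` as `|ξ| → ∞`. -/
theorem stmt_12 (v u_c μ β : ℝ) (hv : 0 < v) (huc : u_c ∈ Ioo (0:ℝ) 1) (hμ : 0 < μ)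
    (f : ℝ → ℝ) (hf : ContDiff ℝ 1 f)
    (U U' U'' : ℝ → ℝ)
    (hU' : ∀ ξ : ℝ, HasDerivAt U (U' ξ) ξ)
    (hU'c : Continuous U')
    (hU'' : ∀ ξ : ℝ, ξ ≠ 0 → HasDerivAt U' (U'' ξ) ξ)
    (hU''c : ContinuousOn U'' {(0:ℝ)}ᶜ)
    (hodeL : ∀ ξ : ℝ, ξ < 0 → U'' ξ + v * U' ξ + f (U ξ) = 0)
    (hR : ∀ ξ : ℝ, 0 ≤ ξ → U ξ = u_c * Real.exp (-v * ξ))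
    (hU''lim : ∃ l₁ l₂ : ℝ, Tendsto U'' (nhdsWithin 0 (Iio 0)) (nhds l₁) ∧
      Tendsto U'' (nhdsWithin 0 (Ioi 0)) (nhds l₂))
    (a : ℝ → ℝ) (ha : ∀ ξ : ℝ, a ξ = -(β/μ) * U' ξ) :
    -- (i)
    (∀ ξ : ℝ, ξ ≠ 0 →
      DifferentiableAt ℝ a ξ ∧ DifferentiableAt ℝ (deriv a) ξ ∧
      deriv (deriv a) ξ + v * deriv a ξ
        - (μ - (if ξ < 0 then deriv f (U ξ) else 0)) * a ξ = β * U' ξ) ∧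
    -- (ii)
    (ContinuousAt a 0 ∧ a 0 = (β/μ) * v * u_c) ∧
    -- (iii)
    (∀ l₁ l₂ : ℝ,
      Tendsto (deriv a) (nhdsWithin 0 (Iio 0)) (nhds l₁) →
      Tendsto (deriv a) (nhdsWithin 0 (Ioi 0)) (nhds l₂) →
      l₂ - l₁ = -f u_c * (v * u_c)⁻¹ * a 0) ∧
    -- (iv)
    (Tendsto U' atBot (nhds 0) →
      Tendsto a atBot (nhds 0) ∧ Tendsto a atTop (nhds 0)) := by
  obtain ⟨huc0, _⟩ := huc
  have hμ' : μ ≠ 0 := hμ.ne'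
  have hv' : v ≠ 0 := hv.ne'
  have huc' : u_c ≠ 0 := huc0.ne'
  set c : ℝ := -(β / μ) with hc
  have haf : a = fun x => c * U' x := funext fun x => ha x
  have hUc : Continuous U := by
    rw [continuous_iff_continuousAt]
    exact fun x => (hU' x).continuousAt
  have hfd : ∀ x : ℝ, HasDerivAt f (deriv f x) x :=
    fun x => (hf.differentiable one_ne_zero x).hasDerivAt
  -- derivative of k * exp(-v x)
  have hExp : ∀ (k ξ : ℝ), HasDerivAt (fun x => k * Real.exp (-v * x))
      (-v * k * Real.exp (-v * ξ)) ξ := by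
    intro k ξ
    have h1 : HasDerivAt (fun x : ℝ => -v * x) (-v) ξ := by
      simpa using (hasDerivAt_id ξ).const_mul (-v)
    have h2 : HasDerivAt (fun x : ℝ => k * Real.exp (-v * x))
        (k * (Real.exp (-v * ξ) * -v)) ξ :=
      ((Real.hasDerivAt_exp (-v * ξ)).comp ξ h1).const_mul k
    convert h2 using 1
    ring
  have hU'pos : ∀ ξ : ℝ, 0 < ξ → U' ξ = -v * u_c * Real.exp (-v * ξ) := by
    intro ξ hξ
    have hev : U =ᶠ[nhds ξ] fun x => u_c * Real.exp (-v * x) :=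
      eventuallyEq_of_mem (Ioi_mem_nhds hξ) (fun x hx => hR x (le_of_lt hx))
    exact (hU' ξ).unique ((hExp u_c ξ).congr_of_eventuallyEq hev)
  have hU'0 : U' 0 = -v * u_c := by
    have t1 : Tendsto U' (nhdsWithin 0 (Ioi 0)) (nhds (U' 0)) :=
      (hU'c.tendsto 0).mono_left nhdsWithin_le_nhds
    have t3 : Tendsto (fun x : ℝ => -v * u_c * Real.exp (-v * x))
        (nhdsWithin 0 (Ioi 0)) (nhds (-v * u_c * Real.exp (-v * 0))) :=
      ((continuous_const.mul (Real.continuous_exp.comp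
        (continuous_const.mul continuous_id))).tendsto 0).mono_left nhdsWithin_le_nhds
    have ev : (fun x : ℝ => -v * u_c * Real.exp (-v * x)) =ᶠ[nhdsWithin 0 (Ioi 0)] U' :=
      eventuallyEq_of_mem self_mem_nhdsWithin (fun x hx => (hU'pos x hx).symm)
    have t2 : Tendsto U' (nhdsWithin 0 (Ioi 0)) (nhds (-v * u_c)) := by
      simpa using t3.congr' ev
    exact tendsto_nhds_unique t1 t2
  have ha' : ∀ ξ : ℝ, ξ ≠ 0 → HasDerivAt a (c * U'' ξ) ξ := by
    intro ξ h
    rw [haf]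
    exact (hU'' ξ h).const_mul c
  have hda : ∀ ξ : ℝ, ξ ≠ 0 → deriv a ξ = c * U'' ξ := fun ξ h => (ha' ξ h).deriv
  have hU''pos : ∀ ξ : ℝ, 0 < ξ → U'' ξ = -v * (-v * u_c) * Real.exp (-v * ξ) := by
    intro ξ hξ
    have hev : U' =ᶠ[nhds ξ] fun x => -v * u_c * Real.exp (-v * x) :=
      eventuallyEq_of_mem (Ioi_mem_nhds hξ) (fun x hx => hU'pos x hx)
    exact (hU'' ξ hξ.ne').unique ((hExp (-v * u_c) ξ).congr_of_eventuallyEq hev)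
  have hleft : ∀ ξ : ℝ, ξ < 0 → HasDerivAt (deriv a)
      (-c * (v * U'' ξ + deriv f (U ξ) * U' ξ)) ξ := by
    intro ξ hξ
    have hfU : HasDerivAt (fun x => f (U x)) (deriv f (U ξ) * U' ξ) ξ :=
      (hfd (U ξ)).comp ξ (hU' ξ)
    have hg : HasDerivAt (fun x => -c * (v * U' x + f (U x)))
        (-c * (v * U'' ξ + deriv f (U ξ) * U' ξ)) ξ :=
      (((hU'' ξ hξ.ne).const_mul v).add hfU).const_mul (-c)
    have hev : deriv a =ᶠ[nhds ξ] fun x => -c * (v * U' x + f (U x)) := by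
      filter_upwards [Iio_mem_nhds hξ] with x hx
      have h1 : U'' x = -(v * U' x + f (U x)) := by have := hodeL x hx; linarith
      rw [hda x hx.ne, h1]; ring
    exact hg.congr_of_eventuallyEq hev
  have hright : ∀ ξ : ℝ, 0 < ξ → HasDerivAt (deriv a)
      (-v * (c * (-v * (-v * u_c))) * Real.exp (-v * ξ)) ξ := by
    intro ξ hξ
    have hev : deriv a =ᶠ[nhds ξ] fun x => c * (-v * (-v * u_c)) * Real.exp (-v * x) := by
      filter_upwards [Ioi_mem_nhds hξ] with x hx
      rw [hda x hx.ne', hU''pos x hx]; ring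
    exact (hExp (c * (-v * (-v * u_c))) ξ).congr_of_eventuallyEq hev
  refine ⟨?_, ⟨?_, ?_⟩, ?_, ?_⟩
  · -- (i)
    intro ξ hξ
    rcases lt_or_gt_of_ne hξ with h | h
    · refine ⟨(ha' ξ hξ).differentiableAt, (hleft ξ h).differentiableAt, ?_⟩
      rw [(hleft ξ h).deriv, hda ξ hξ, ha ξ, if_pos h, hc]
      field_simp
      ring
    · refine ⟨(ha' ξ hξ).differentiableAt, (hright ξ h).differentiableAt, ?_⟩
      rw [(hright ξ h).deriv, hda ξ hξ, hU''pos ξ h, ha ξ, hU'pos ξ h,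
        if_neg (not_lt.mpr h.le), hc]
      field_simp
      ring
  · -- (ii) continuity
    rw [haf]
    exact (continuous_const.mul hU'c).continuousAt
  · -- (ii) value
    rw [ha 0, hU'0, hc]
    ring
  · -- (iii)
    intro l₁ l₂ h₁ h₂
    have hU0 : U 0 = u_c := by simpa using hR 0 le_rfl
    have ev₁ : deriv a =ᶠ[nhdsWithin 0 (Iio 0)] fun x => -c * (v * U' x + f (U x)) := by
      filter_upwards [self_mem_nhdsWithin] with x hx
      have h1 : U'' x = -(v * U' x + f (U x)) := by have := hodeL x hx; linarith
      rw [hda x (ne_of_lt hx), h1]; ring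
    have t₁ : Tendsto (fun x => -c * (v * U' x + f (U x))) (nhdsWithin 0 (Iio 0))
        (nhds (-c * (v * U' 0 + f (U 0)))) :=
      ((continuous_const.mul ((continuous_const.mul hU'c).add
        (hf.continuous.comp hUc))).tendsto 0).mono_left nhdsWithin_le_nhds
    have hl₁ : l₁ = -c * (v * U' 0 + f (U 0)) :=
      tendsto_nhds_unique h₁ (t₁.congr' ev₁.symm)
    have ev₂ : deriv a =ᶠ[nhdsWithin 0 (Ioi 0)]
        fun x => c * (-v * (-v * u_c)) * Real.exp (-v * x) := by
      filter_upwards [self_mem_nhdsWithin] with x hx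
      rw [hda x (ne_of_gt hx), hU''pos x hx]; ring
    have t₂ : Tendsto (fun x : ℝ => c * (-v * (-v * u_c)) * Real.exp (-v * x))
        (nhdsWithin 0 (Ioi 0)) (nhds (c * (-v * (-v * u_c)) * Real.exp (-v * 0))) :=
      ((continuous_const.mul (Real.continuous_exp.comp
        (continuous_const.mul continuous_id))).tendsto 0).mono_left nhdsWithin_le_nhds
    have hl₂ : l₂ = c * (-v * (-v * u_c)) * Real.exp (-v * 0) :=
      tendsto_nhds_unique h₂ (t₂.congr' ev₂.symm)
    rw [hl₁, hl₂, hU'0, hU0, ha 0, hU'0,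
      show (-v : ℝ) * 0 = 0 from by ring, Real.exp_zero, hc]
    field_simp
    ring
  · -- (iv)
    intro hbot
    constructor
    · rw [haf]
      simpa using hbot.const_mul c
    · have h1 : Tendsto (fun x : ℝ => -v * x) atTop atBot := by
        apply Filter.Tendsto.const_mul_atTop_of_neg (by linarith : -v < 0) tendsto_id
      have h2 : Tendsto (fun x : ℝ => Real.exp (-v * x)) atTop (nhds 0) :=
        Real.tendsto_exp_atBot.comp h1
      have h3 : Tendsto (fun x : ℝ => c * (-v * u_c * Real.exp (-v * x))) atTop (nhds 0) := by
        simpa [mul_assoc] using h2.const_mul (c * (-v * u_c))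
      refine h3.congr' ?_
      filter_upwards [eventually_gt_atTop (0 : ℝ)] with x hx
      rw [ha x, hU'pos x hx, hc]
end

section
/- Let v > 0, u_c ∈ (0,1), and let f : ℝ → ℝ be continuously differentiable. Suppose U : ℝ → ℝ is continuously differentiable on ℝ and twice continuously differentiable on ℝ∖{0}, satisfies U''(ξ) + v·U'(ξ) + f(U(ξ)) = 0 for all ξ < 0, U(ξ) = u_c·e^{−vξ} for all ξ ≥ 0, U'' has finite one-sided limits at 0, and ∫_{−∞}^0 (U'(s))²·e^{vs} ds is finite. Let v₁ ∈ ℝ and let a : ℝ → ℝ be continuous on ℝ, continuously differentiable on ℝ∖{0} with finite one-sided limits a'(0⁺), a'(0⁻), and twice continuously differentiable on ℝ∖{0}, satisfying: a''(ξ) + v·a'(ξ) + 1_{ξ<0}·f'(U(ξ))·a(ξ) = −v₁·U'(ξ) for all ξ ∈ ℝ∖{0}; a'(0⁺) − a'(0⁻) = −f(u_c)·(v·u_c)^{−1}·a(0); and e^{vξ}(a'(ξ)U'(ξ) − a(ξ)U''(ξ)) → 0 as ξ → +∞ and as ξ → −∞. Then v₁ = 0. -/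
open Set Filter MeasureTheory

/-- Solvability condition for the mean mode of the first-order correction to the cut-off
KPP travelling wave `U` (speed `v`, cut-off `u_c`): if `a` solves
`a'' + va' + 1_{ξ<0} f'(U)a = −v₁U'` away from `0`, with the interface jump
`a'(0⁺) − a'(0⁻) = −f(u_c)(vu_c)⁻¹ a(0)` and vanishing flux
`e^{vξ}(a'U' − aU'') → 0` at `±∞`, then `v₁ = 0`. -/
theorem stmt_13 (v u_c v₁ : ℝ) (hv : 0 < v) (huc : u_c ∈ Ioo (0:ℝ) 1)
    (f : ℝ → ℝ) (hf : ContDiff ℝ 1 f)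
    (U U' U'' : ℝ → ℝ)
    (hU' : ∀ ξ : ℝ, HasDerivAt U (U' ξ) ξ)
    (hU'c : Continuous U')
    (hU'' : ∀ ξ : ℝ, ξ ≠ 0 → HasDerivAt U' (U'' ξ) ξ)
    (hU''c : ContinuousOn U'' {(0:ℝ)}ᶜ)
    (hodeL : ∀ ξ : ℝ, ξ < 0 → U'' ξ + v * U' ξ + f (U ξ) = 0)
    (hR : ∀ ξ : ℝ, 0 ≤ ξ → U ξ = u_c * Real.exp (-v * ξ))
    (hU''lim : ∃ l₁ l₂ : ℝ, Tendsto U'' (nhdsWithin 0 (Iio 0)) (nhds l₁) ∧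
      Tendsto U'' (nhdsWithin 0 (Ioi 0)) (nhds l₂))
    (hint : IntegrableOn (fun s => (U' s)^2 * Real.exp (v * s)) (Iic 0))
    (a a' a'' : ℝ → ℝ)
    (hac : Continuous a)
    (ha' : ∀ ξ : ℝ, ξ ≠ 0 → HasDerivAt a (a' ξ) ξ)
    (ha'' : ∀ ξ : ℝ, ξ ≠ 0 → HasDerivAt a' (a'' ξ) ξ)
    (ha''c : ContinuousOn a'' {(0:ℝ)}ᶜ)
    (ap am : ℝ)
    (hap : Tendsto a' (nhdsWithin 0 (Ioi 0)) (nhds ap))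
    (ham : Tendsto a' (nhdsWithin 0 (Iio 0)) (nhds am))
    (haode : ∀ ξ : ℝ, ξ ≠ 0 →
      a'' ξ + v * a' ξ + (if ξ < 0 then deriv f (U ξ) else 0) * a ξ = -v₁ * U' ξ)
    (hjump : ap - am = -f u_c * (v * u_c)⁻¹ * a 0)
    (hfluxT : Tendsto (fun ξ => Real.exp (v*ξ) * (a' ξ * U' ξ - a ξ * U'' ξ))
      atTop (nhds 0))
    (hfluxB : Tendsto (fun ξ => Real.exp (v*ξ) * (a' ξ * U' ξ - a ξ * U'' ξ))
      atBot (nhds 0)) :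
    v₁ = 0 := by
  obtain ⟨huc0, _⟩ := huc
  have hvu : v * u_c ≠ 0 := by positivity
  -- derivative of exponentials
  have hexp : ∀ (c ξ : ℝ), HasDerivAt (fun s => Real.exp (c*s)) (c * Real.exp (c*ξ)) ξ := by
    intro c ξ
    simpa [mul_comm] using ((hasDerivAt_id ξ).const_mul c).exp
  have hUc : Continuous U := by
    rw [continuous_iff_continuousAt]; exact fun x => (hU' x).continuousAt
  -- U' on the right half-line
  have hU'pos : ∀ ξ : ℝ, 0 < ξ → U' ξ = -(v*u_c) * Real.exp (-v*ξ) := by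
    intro ξ hξ
    have hd : HasDerivAt (fun s => u_c * Real.exp (-v*s)) (-(v*u_c) * Real.exp (-v*ξ)) ξ := by
      have := (hexp (-v) ξ).const_mul u_c
      exact this.congr_deriv (by ring)
    have heq : U =ᶠ[nhds ξ] (fun s => u_c * Real.exp (-v*s)) := by
      filter_upwards [Ioi_mem_nhds hξ] with s hs
      exact hR s (le_of_lt hs)
    exact (hU' ξ).unique (hd.congr_of_eventuallyEq heq)
  have hU'0 : U' 0 = -(v*u_c) := by
    have t1 : Tendsto U' (nhdsWithin 0 (Ioi 0)) (nhds (U' 0)) :=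
      (hU'c.tendsto 0).mono_left nhdsWithin_le_nhds
    have t2 : Tendsto U' (nhdsWithin 0 (Ioi 0)) (nhds (-(v*u_c))) := by
      have tc : Tendsto (fun s : ℝ => -(v*u_c) * Real.exp (-v*s)) (nhdsWithin 0 (Ioi 0))
          (nhds (-(v*u_c) * Real.exp (-v*0))) :=
        (Continuous.tendsto (by fun_prop) 0).mono_left nhdsWithin_le_nhds
      simp only [mul_zero, Real.exp_zero, mul_one] at tc
      refine tc.congr' ?_
      filter_upwards [self_mem_nhdsWithin] with s hs
      exact (hU'pos s hs).symm
    exact tendsto_nhds_unique t1 t2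
  -- U'' on the right half-line
  have hU''pos : ∀ ξ : ℝ, 0 < ξ → U'' ξ = (v*(v*u_c)) * Real.exp (-v*ξ) := by
    intro ξ hξ
    have hd : HasDerivAt (fun s => -(v*u_c) * Real.exp (-v*s))
        ((v*(v*u_c)) * Real.exp (-v*ξ)) ξ := by
      have := (hexp (-v) ξ).const_mul (-(v*u_c))
      exact this.congr_deriv (by ring)
    have heq : U' =ᶠ[nhds ξ] (fun s => -(v*u_c) * Real.exp (-v*s)) := by
      filter_upwards [Ioi_mem_nhds hξ] with s hs
      exact hU'pos s hs
    exact (hU'' ξ (ne_of_gt hξ)).unique (hd.congr_of_eventuallyEq heq)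
  -- auxiliary function on the right half-line
  set h : ℝ → ℝ := fun ξ => a' ξ + v * a ξ + v₁ * u_c * Real.exp (-v*ξ) with hh
  have hd0 : ∀ ξ : ℝ, 0 < ξ → HasDerivAt h 0 ξ := by
    intro ξ hξ
    have hne : ξ ≠ 0 := ne_of_gt hξ
    have hd : HasDerivAt h (a'' ξ + v * a' ξ + v₁ * u_c * (-v * Real.exp (-v*ξ))) ξ :=
      ((ha'' ξ hne).add ((ha' ξ hne).const_mul v)).add ((hexp (-v) ξ).const_mul (v₁ * u_c))
    have heq : a'' ξ + v * a' ξ + v₁ * u_c * (-v * Real.exp (-v*ξ)) = 0 := by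
      have h1 := haode ξ hne
      rw [if_neg (not_lt.mpr (le_of_lt hξ)), hU'pos ξ hξ] at h1
      nlinarith [h1]
    rwa [heq] at hd
  have htop : Tendsto h atTop (nhds 0) := by
    have t3 : Tendsto (fun ξ : ℝ => v₁ * u_c * Real.exp (-v*ξ)) atTop (nhds 0) := by
      have e1 : Tendsto (fun ξ : ℝ => Real.exp (-(v*ξ))) atTop (nhds 0) :=
        Real.tendsto_exp_neg_atTop_nhds_zero.comp (tendsto_id.const_mul_atTop hv)
      have := e1.const_mul (v₁ * u_c)
      simp only [mul_zero] at this
      refine this.congr fun ξ => by rw [neg_mul]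
    have t2 := hfluxT.const_mul (-(v*u_c)⁻¹)
    simp only [mul_zero] at t2
    have t1 := t2.add t3
    rw [add_zero] at t1
    refine t1.congr' ?_
    filter_upwards [Ioi_mem_atTop 0] with ξ (hξ : 0 < ξ)
    rw [hU'pos ξ hξ, hU''pos ξ hξ]
    have hne := Real.exp_ne_zero (v*ξ)
    simp only [hh, neg_mul, Real.exp_neg]
    field_simp
    ring
  have hzero : ∀ x : ℝ, 0 < x → h x = 0 := by
    intro x hx
    have hconst : ∀ y, x ≤ y → h y = h x := by
      intro y hy
      rcases eq_or_lt_of_le hy with rfl | hlt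
      · rfl
      · have hcont : ContinuousOn h (Icc x y) := fun z hz =>
          ((hd0 z (lt_of_lt_of_le hx hz.1)).continuousAt).continuousWithinAt
        obtain ⟨c, _, hceq⟩ := exists_hasDerivAt_eq_slope h (fun _ => 0) hlt hcont
          (fun z hz => hd0 z (lt_of_lt_of_le hx (le_of_lt hz.1)))
        have hyx : y - x ≠ 0 := sub_ne_zero.mpr (ne_of_gt hlt)
        have : (0:ℝ) = (h y - h x) / (y - x) := hceq
        field_simp at this
        linarith
    have t4 : Tendsto h atTop (nhds (h x)) := by
      refine tendsto_const_nhds.congr' ?_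
      filter_upwards [Ici_mem_atTop x] with y hy
      exact (hconst y hy).symm
    exact tendsto_nhds_unique t4 htop
  -- limit of h at 0⁺ gives the key right-hand relation
  have hB3 : ap + v * a 0 + v₁ * u_c = 0 := by
    have t5 : Tendsto h (nhdsWithin 0 (Ioi 0)) (nhds (ap + v * a 0 + v₁ * u_c)) := by
      have ta : Tendsto (fun ξ : ℝ => v * a ξ + v₁ * u_c * Real.exp (-v*ξ))
          (nhdsWithin 0 (Ioi 0)) (nhds (v * a 0 + v₁ * u_c * Real.exp (-v*0))) :=
        (Continuous.tendsto (by fun_prop) 0).mono_left nhdsWithin_le_nhds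
      simp only [mul_zero, Real.exp_zero, mul_one] at ta
      have t := hap.add ta
      rw [show ap + (v * a 0 + v₁ * u_c) = ap + v * a 0 + v₁ * u_c by ring] at t
      refine t.congr fun ξ => by rw [hh]; ring
    have t6 : Tendsto h (nhdsWithin 0 (Ioi 0)) (nhds 0) := by
      refine tendsto_const_nhds.congr' ?_
      filter_upwards [self_mem_nhdsWithin] with s hs
      exact (hzero s hs).symm
    exact tendsto_nhds_unique t5 t6
  -- the left half-line
  obtain ⟨l₁, l₂, hl₁, hl₂⟩ := hU''lim
  have hU0 : U 0 = u_c := by simpa using hR 0 le_rfl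
  have hl1val : l₁ = v*(v*u_c) - f u_c := by
    have t7 : Tendsto (fun ξ => U'' ξ + v * U' ξ + f (U ξ)) (nhdsWithin 0 (Iio 0))
        (nhds (l₁ + v * U' 0 + f (U 0))) :=
      (hl₁.add (((hU'c.tendsto 0).const_mul v).mono_left nhdsWithin_le_nhds)).add
        (((hf.continuous.comp hUc).tendsto 0).mono_left nhdsWithin_le_nhds)
    have t8 : Tendsto (fun ξ => U'' ξ + v * U' ξ + f (U ξ)) (nhdsWithin 0 (Iio 0)) (nhds 0) := by
      refine tendsto_const_nhds.congr' ?_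
      filter_upwards [self_mem_nhdsWithin] with s hs
      exact (hodeL s hs).symm
    have := tendsto_nhds_unique t7 t8
    rw [hU0, hU'0] at this
    linarith
  -- third derivative of U on the left
  have hU''' : ∀ ξ : ℝ, ξ < 0 →
      HasDerivAt U'' (-(v * U'' ξ) - deriv f (U ξ) * U' ξ) ξ := by
    intro ξ hξ
    have hfd : HasDerivAt (fun s => f (U s)) (deriv f (U ξ) * U' ξ) ξ :=
      (((hf.differentiable one_ne_zero) (U ξ)).hasDerivAt).comp ξ (hU' ξ)
    have hd : HasDerivAt (fun s => -(v * U' s) - f (U s))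
        (-(v * U'' ξ) - deriv f (U ξ) * U' ξ) ξ :=
      (((hU'' ξ (ne_of_lt hξ)).const_mul v).neg).sub hfd
    refine hd.congr_of_eventuallyEq ?_
    filter_upwards [Iio_mem_nhds hξ] with s hs
    have := hodeL s hs
    linarith
  -- derivative of the flux on the left
  set g : ℝ → ℝ := fun ξ => Real.exp (v*ξ) * (a' ξ * U' ξ - a ξ * U'' ξ) with hg
  have hW' : ∀ ξ : ℝ, ξ < 0 →
      HasDerivAt g (-v₁ * ((U' ξ)^2 * Real.exp (v*ξ))) ξ := by
    intro ξ hξ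
    have hne : ξ ≠ 0 := ne_of_lt hξ
    have hinner : HasDerivAt (fun s => a' s * U' s - a s * U'' s)
        (a'' ξ * U' ξ + a' ξ * U'' ξ -
          (a' ξ * U'' ξ + a ξ * (-(v * U'' ξ) - deriv f (U ξ) * U' ξ))) ξ :=
      ((ha'' ξ hne).mul (hU'' ξ hne)).sub ((ha' ξ hne).mul (hU''' ξ hξ))
    have hW : HasDerivAt g (v * Real.exp (v*ξ) * (a' ξ * U' ξ - a ξ * U'' ξ) +
        Real.exp (v*ξ) * (a'' ξ * U' ξ + a' ξ * U'' ξ -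
          (a' ξ * U'' ξ + a ξ * (-(v * U'' ξ) - deriv f (U ξ) * U' ξ)))) ξ :=
      (hexp v ξ).mul hinner
    have hae : a'' ξ = -v₁ * U' ξ - v * a' ξ - deriv f (U ξ) * a ξ := by
      have := haode ξ hne
      rw [if_pos hξ] at this
      linarith
    convert hW using 1
    rw [hae]; ring
  -- modified flux, continuous up to 0 from the left
  set L : ℝ := am * U' 0 - a 0 * l₁ with hL
  set Wl : ℝ → ℝ := fun ξ => if ξ < 0 then g ξ else L with hWl
  have hWl0 : Wl 0 = L := by simp [hWl]
  have hWl' : ∀ x ∈ Iio (0:ℝ), HasDerivAt Wl (-v₁ * ((U' x)^2 * Real.exp (v*x))) x := by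
    intro x hx
    refine (hW' x hx).congr_of_eventuallyEq ?_
    filter_upwards [Iio_mem_nhds hx] with s hs
    simp only [hWl]
    rw [if_pos (show s < 0 from hs)]
  have hWlcont : ContinuousWithinAt Wl (Iic 0) 0 := by
    have hsplit : Iic (0:ℝ) = Iio 0 ∪ {0} := Iio_union_right.symm
    rw [ContinuousWithinAt, hWl0, hsplit, nhdsWithin_union, tendsto_sup]
    constructor
    · have tg : Tendsto g (nhdsWithin 0 (Iio 0))
          (nhds (Real.exp (v*0) * (am * U' 0 - a 0 * l₁))) := by
        refine Tendsto.mul ?_ ?_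
        · exact (Continuous.tendsto (by fun_prop) 0).mono_left nhdsWithin_le_nhds
        · exact (ham.mul ((hU'c.tendsto 0).mono_left nhdsWithin_le_nhds)).sub
            (((hac.tendsto 0).mono_left nhdsWithin_le_nhds).mul hl₁)
      simp only [mul_zero, Real.exp_zero, one_mul] at tg
      rw [← hL] at tg
      refine tg.congr' ?_
      filter_upwards [self_mem_nhdsWithin] with s hs
      simp only [hWl]
      rw [if_pos (show s < 0 from hs)]
    · rw [nhdsWithin_singleton]
      rw [← hWl0]
      exact tendsto_pure_nhds Wl 0
  have hWlbot : Tendsto Wl atBot (nhds 0) := by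
    refine hfluxB.congr' ?_
    filter_upwards [Iio_mem_atBot 0] with s hs
    simp only [hWl, hg]
    rw [if_pos (show s < 0 from hs)]
  have hInt : IntegrableOn (fun x => -v₁ * ((U' x)^2 * Real.exp (v*x))) (Iic 0) :=
    hint.const_mul (-v₁)
  have key1 : ∫ x in Iic (0:ℝ), -v₁ * ((U' x)^2 * Real.exp (v*x)) = Wl 0 - 0 :=
    integral_Iic_of_hasDerivAt_of_tendsto hWlcont hWl' hInt hWlbot
  set I : ℝ := ∫ x in Iic (0:ℝ), (U' x)^2 * Real.exp (v*x) with hI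
  have keyL : -v₁ * I = L := by
    rw [← sub_zero L, ← hWl0, ← key1, hI, integral_const_mul]
  have Inonneg : 0 ≤ I := by
    refine setIntegral_nonneg measurableSet_Iic fun x _ => by positivity
  -- final algebra
  rw [hL, hU'0, hl1val] at keyL
  have ham' : am = ap + f u_c * (v * u_c)⁻¹ * a 0 := by linarith
  have hap' : ap = -(v * a 0) - v₁ * u_c := by linarith
  rw [ham', hap'] at keyL
  have hinv : (v * u_c) * (v * u_c)⁻¹ = 1 := mul_inv_cancel₀ hvu
  have key : v₁ * (I + v * u_c^2) = 0 := by
    have expand : (-(v * a 0) - v₁ * u_c + f u_c * (v * u_c)⁻¹ * a 0) * (-(v*u_c)) -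
        a 0 * (v*(v*u_c) - f u_c) =
        v₁ * u_c * (v * u_c) - f u_c * a 0 * ((v * u_c) * (v * u_c)⁻¹) + f u_c * a 0 := by
      ring
    rw [expand, hinv] at keyL
    nlinarith [keyL]
  have hpos : 0 < I + v * u_c^2 := by positivity
  rcases mul_eq_zero.mp key with h0 | h0
  · exact h0
  · exact absurd h0 (ne_of_gt hpos)
end

section
/- Let y_M ∈ (0,1), c ∈ ℝ, and let ψ : [0,1] → ℝ be continuously differentiable with 0 < ψ(y) ≤ 1 for all y ∈ [0,1]. Define z₀ : [0,1] → ℝ by z₀(y) = ψ(y)^{−1}·( c + ∫_0^y (1 − ψ(s)²)^{1/2} ds ) for 0 ≤ y ≤ y_M, and z₀(y) = ψ(y)^{−1}·( c + ∫_0^{y_M} (1 − ψ(s)²)^{1/2} ds − ∫_{y_M}^y (1 − ψ(s)²)^{1/2} ds ) for y_M ≤ y ≤ 1. Then z₀ is continuous on [0,1], differentiable at every y ∈ (0,1)∖{y_M}, and at every such y satisfies the eikonal relation ψ(y)²·(1 + z₀'(y)²) + 2·z₀(y)·z₀'(y)·ψ(y)·ψ'(y) + z₀(y)²·ψ'(y)²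 = 1. -/
open Set MeasureTheory

/-- The explicit quadrature for the thin-front interface: with `0 < ψ ≤ 1` continuously
differentiable on `[0,1]` and `z₀` defined piecewise by
`z₀(y) = ψ(y)⁻¹(c + ∫_0^y √(1−ψ²))` for `y ≤ y_M` and
`z₀(y) = ψ(y)⁻¹(c + ∫_0^{y_M} √(1−ψ²) − ∫_{y_M}^y √(1−ψ²))` for `y ≥ y_M`,
`z₀` is continuous on `[0,1]`, differentiable on `(0,1)∖{y_M}`, and satisfies the
eikonal relation `ψ²(1 + z₀'²) + 2z₀z₀'ψψ' + z₀²ψ'² = 1` there. -/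
theorem stmt_18 (y_M c : ℝ) (hyM : y_M ∈ Ioo (0:ℝ) 1)
    (ψ ψ' : ℝ → ℝ)
    (hψ' : ∀ y ∈ Icc (0:ℝ) 1, HasDerivWithinAt ψ (ψ' y) (Icc 0 1) y)
    (hψ'c : ContinuousOn ψ' (Icc 0 1))
    (hψb : ∀ y ∈ Icc (0:ℝ) 1, 0 < ψ y ∧ ψ y ≤ 1)
    (z₀ : ℝ → ℝ)
    (hz₀L : ∀ y : ℝ, y ≤ y_M →
      z₀ y = (ψ y)⁻¹ * (c + ∫ s in (0:ℝ)..y, Real.sqrt (1 - ψ s^2)))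
    (hz₀R : ∀ y : ℝ, y_M ≤ y →
      z₀ y = (ψ y)⁻¹ * (c + (∫ s in (0:ℝ)..y_M, Real.sqrt (1 - ψ s^2))
        - ∫ s in y_M..y, Real.sqrt (1 - ψ s^2))) :
    ContinuousOn z₀ (Icc 0 1) ∧
    ∀ y ∈ Ioo (0:ℝ) 1, y ≠ y_M → ∃ d : ℝ, HasDerivAt z₀ d y ∧
      ψ y^2 * (1 + d^2) + 2 * z₀ y * d * ψ y * ψ' y + (z₀ y)^2 * (ψ' y)^2 = 1 := by
  set g : ℝ → ℝ := fun x => Real.sqrt (1 - ψ x ^ 2) with hg_def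
  have hyM01 : y_M ∈ Icc (0:ℝ) 1 := ⟨hyM.1.le, hyM.2.le⟩
  have hψc : ContinuousOn ψ (Icc 0 1) := fun y hy => (hψ' y hy).continuousWithinAt
  have hgc : ContinuousOn g (Icc 0 1) :=
    Real.continuous_sqrt.comp_continuousOn (continuousOn_const.sub (hψc.pow 2))
  have hgint : IntervalIntegrable g volume 0 1 := by
    apply ContinuousOn.intervalIntegrable
    rwa [uIcc_of_le (by norm_num : (0:ℝ) ≤ 1)]
  have hψinvc : ContinuousOn (fun x => (ψ x)⁻¹) (Icc 0 1) :=
    hψc.inv₀ (fun y hy => (hψb y hy).1.ne')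
  -- Continuity
  have hcontL : ContinuousOn z₀ (Icc 0 y_M) := by
    have hsub : Icc (0:ℝ) y_M ⊆ Icc 0 1 := Icc_subset_Icc le_rfl hyM.2.le
    have hprim : ContinuousOn (fun x => ∫ s in (0:ℝ)..x, g s) (Icc 0 y_M) := by
      have := intervalIntegral.continuousOn_primitive_interval'
        (hgint.mono_set (by rw [uIcc_of_le hyM.1.le, uIcc_of_le (by norm_num : (0:ℝ) ≤ 1)]; exact hsub))
        (by rw [uIcc_of_le hyM.1.le]; exact ⟨le_rfl, hyM.1.le⟩)
      rwa [uIcc_of_le hyM.1.le] at this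
      -- this : ContinuousOn over uIcc 0 y_M
    exact (ContinuousOn.mul (hψinvc.mono hsub) (continuousOn_const.add hprim)).congr
      (fun x hx => hz₀L x hx.2)
  have hcontR : ContinuousOn z₀ (Icc y_M 1) := by
    have hsub : Icc y_M (1:ℝ) ⊆ Icc 0 1 := Icc_subset_Icc hyM.1.le le_rfl
    have hprim : ContinuousOn (fun x => ∫ s in y_M..x, g s) (Icc y_M 1) := by
      have := intervalIntegral.continuousOn_primitive_interval'
        (hgint.mono_set (by rw [uIcc_of_le hyM.2.le, uIcc_of_le (by norm_num : (0:ℝ) ≤ 1)]; exact hsub))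
        (by rw [uIcc_of_le hyM.2.le]; exact ⟨le_rfl, hyM.2.le⟩)
      rwa [uIcc_of_le hyM.2.le] at this
    exact (ContinuousOn.mul (hψinvc.mono hsub)
      ((continuousOn_const.sub hprim))).congr (fun x hx => hz₀R x hx.1)
  have hcont : ContinuousOn z₀ (Icc 0 1) := by
    rw [← Icc_union_Icc_eq_Icc hyM.1.le hyM.2.le]
    intro x hx
    have c1 : ContinuousWithinAt z₀ (Icc 0 y_M) x := by
      by_cases h : x ∈ Icc (0:ℝ) y_M
      · exact hcontL x h
      · exact continuousWithinAt_of_notMem_closure (by rwa [isClosed_Icc.closure_eq])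
    have c2 : ContinuousWithinAt z₀ (Icc y_M 1) x := by
      by_cases h : x ∈ Icc y_M (1:ℝ)
      · exact hcontR x h
      · exact continuousWithinAt_of_notMem_closure (by rwa [isClosed_Icc.closure_eq])
    exact c1.union c2
  refine ⟨hcont, ?_⟩
  intro y hy hne
  have hy01 : y ∈ Icc (0:ℝ) 1 := ⟨hy.1.le, hy.2.le⟩
  have hIccnhds : Icc (0:ℝ) 1 ∈ nhds y := Icc_mem_nhds hy.1 hy.2
  have hψd : HasDerivAt ψ (ψ' y) y := (hψ' y hy01).hasDerivAt hIccnhds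
  have hψpos : 0 < ψ y := (hψb y hy01).1
  have hψne : ψ y ≠ 0 := hψpos.ne'
  have hψinvd : HasDerivAt (fun x => (ψ x)⁻¹) (-ψ' y / ψ y ^ 2) y := hψd.inv hψne
  have hgcy : ContinuousAt g y := (hgc y hy01).continuousAt hIccnhds
  have hgmeas : StronglyMeasurableAtFilter g (nhds y) :=
    ⟨Icc 0 1, hIccnhds, hgc.aestronglyMeasurable measurableSet_Icc⟩
  have hg2 : g y ^ 2 = 1 - ψ y ^ 2 := by
    rw [hg_def]
    exact Real.sq_sqrt (by nlinarith [(hψb y hy01).2])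
  rcases lt_or_gt_of_ne hne with hlt | hgt
  · -- y < y_M : left branch
    have hint : IntervalIntegrable g volume 0 y :=
      hgint.mono_set (by
        rw [uIcc_of_le hy.1.le, uIcc_of_le (by norm_num : (0:ℝ) ≤ 1)]
        exact Icc_subset_Icc le_rfl hy.2.le)
    have hGd : HasDerivAt (fun x => c + ∫ s in (0:ℝ)..x, g s) (g y) y := by
      simpa using (HasDerivAt.const_add c
        (intervalIntegral.integral_hasDerivAt_right hint hgmeas hgcy))
    have hd : HasDerivAt (fun x => (ψ x)⁻¹ * (c + ∫ s in (0:ℝ)..x, g s))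
        (-ψ' y / ψ y ^ 2 * (c + ∫ s in (0:ℝ)..y, g s) + (ψ y)⁻¹ * g y) y :=
      hψinvd.mul hGd
    have heq : z₀ =ᶠ[nhds y] fun x => (ψ x)⁻¹ * (c + ∫ s in (0:ℝ)..x, g s) :=
      Filter.eventuallyEq_of_mem (Iio_mem_nhds hlt) (fun x hx => hz₀L x (le_of_lt hx))
    refine ⟨_, hd.congr_of_eventuallyEq heq, ?_⟩
    set d := -ψ' y / ψ y ^ 2 * (c + ∫ s in (0:ℝ)..y, g s) + (ψ y)⁻¹ * g y with hd_def
    have hz : z₀ y = (ψ y)⁻¹ * (c + ∫ s in (0:ℝ)..y, g s) := hz₀L y hlt.le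
    have he : ψ y * d + z₀ y * ψ' y = g y := by
      rw [hz, hd_def]; field_simp; ring
    have he2 : (ψ y * d + z₀ y * ψ' y) ^ 2 = 1 - ψ y ^ 2 := by rw [he, hg2]
    linear_combination he2
  · -- y > y_M : right branch
    have hint : IntervalIntegrable g volume y_M y :=
      hgint.mono_set (by
        rw [uIcc_of_le hgt.le, uIcc_of_le (by norm_num : (0:ℝ) ≤ 1)]
        exact Icc_subset_Icc hyM.1.le hy.2.le)
    have hGd : HasDerivAt
        (fun x => c + (∫ s in (0:ℝ)..y_M, g s) - ∫ s in y_M..x, g s) (-g y) y := by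
      simpa using (HasDerivAt.const_sub (c + ∫ s in (0:ℝ)..y_M, g s)
        (intervalIntegral.integral_hasDerivAt_right hint hgmeas hgcy))
    have hd : HasDerivAt
        (fun x => (ψ x)⁻¹ * (c + (∫ s in (0:ℝ)..y_M, g s) - ∫ s in y_M..x, g s))
        (-ψ' y / ψ y ^ 2 * (c + (∫ s in (0:ℝ)..y_M, g s) - ∫ s in y_M..y, g s)
          + (ψ y)⁻¹ * (-g y)) y :=
      hψinvd.mul hGd
    have heq : z₀ =ᶠ[nhds y]
        fun x => (ψ x)⁻¹ * (c + (∫ s in (0:ℝ)..y_M, g s) - ∫ s in y_M..x, g s) :=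
      Filter.eventuallyEq_of_mem (Ioi_mem_nhds hgt) (fun x hx => hz₀R x (le_of_lt hx))
    refine ⟨_, hd.congr_of_eventuallyEq heq, ?_⟩
    set d := -ψ' y / ψ y ^ 2 * (c + (∫ s in (0:ℝ)..y_M, g s) - ∫ s in y_M..y, g s)
      + (ψ y)⁻¹ * (-g y) with hd_def
    have hz : z₀ y = (ψ y)⁻¹ * (c + (∫ s in (0:ℝ)..y_M, g s) - ∫ s in y_M..y, g s) :=
      hz₀R y hgt.le
    have he : ψ y * d + z₀ y * ψ' y = -g y := by
      rw [hz, hd_def]; field_simp; ring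
    have he2 : (ψ y * d + z₀ y * ψ' y) ^ 2 = 1 - ψ y ^ 2 := by
      rw [he]; rw [neg_pow]; simp [hg2]
    linear_combination he2
end
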